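/- Let f and κ : ℝ → EReal be k-convex with speedp(f*) > −∞, let C ⊆ ℝ be a convex set with ψ̄ = sup C ∈ (0, +∞], let χ = χ_C, and set g = max(nat(nat f + χ), κ) (pointwise maximum). Assume g(θ₀) < +∞ for some θ₀. Then g(θ) = +∞ for every θ > 0 with θ ∉ C⁺, and for every θ > 0 with θ ∈ C⁺: g(θ)/θ = inf {max(f(φ)/φ, κ(θ)/θ) : φ ∈ ℝ, 0 < φ ≤ θ, φ ≤ ψ̄} (infimum in EReal). -/

import Mathlib

open Set Filter Topology

noncomputable section

/-- `f : ℝ → EReal` is convex iff its epigraph is a convex set. -/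
def EConvex (f : ℝ → EReal) : Prop :=
  Convex ℝ {p : ℝ × ℝ | f p.1 ≤ (p.2 : EReal)}

/-- The Fenchel dual `f*(a) = sup_θ (θ·a − f(θ))`. -/
def Fd (f : ℝ → EReal) : ℝ → EReal :=
  fun a => ⨆ θ : ℝ, ((θ * a : ℝ) : EReal) - f θ

/-- The sweep `f°`: strictly positive values are swept to `+∞`. -/
def sweep (f : ℝ → EReal) : ℝ → EReal :=
  fun a => if f a ≤ 0 then f a else ⊤

/-- `speedp f = inf {a | f a > 0}`, as an extended real. -/
def speedp (f : ℝ → EReal) : EReal :=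
  sInf ((fun a : ℝ => (a : EReal)) '' {a : ℝ | 0 < f a})

/-- k-convex functions. -/
def KConvex (f : ℝ → EReal) : Prop :=
  EConvex f ∧ (∃ θ : ℝ, 0 < θ ∧ f θ < ⊤) ∧ (∀ θ : ℝ, θ < 0 → f θ = ⊤)

/-- The closure `cl f`: the greatest lower semicontinuous function beneath `f`. -/
def ecl (f : ℝ → EReal) : ℝ → EReal :=
  fun x => ⨆ g : {g : ℝ → EReal // LowerSemicontinuous g ∧ ∀ y, g y ≤ f y}, g.1 x

/-- r-functions: increasing, convex, somewhere in `(−∞,0)`, left continuous,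
and `+∞` whenever strictly positive. -/
def RFunction (r : ℝ → EReal) : Prop :=
  Monotone r ∧ EConvex r ∧ (∃ a : ℝ, ⊥ < r a ∧ r a < 0) ∧
    (∀ a : ℝ, ContinuousWithinAt r (Set.Iio a) a) ∧
    (∀ a : ℝ, 0 < r a → r a = ⊤)

/-- The greatest lower semicontinuous convex function beneath `f` and `g`. -/
def cv (f g : ℝ → EReal) : ℝ → EReal :=
  fun x => ⨆ h : {h : ℝ → EReal //
    LowerSemicontinuous h ∧ EConvex h ∧ (∀ y, h y ≤ f y) ∧ (∀ y, h y ≤ g y)}, h.1 x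

/-- `enat f`: the pointwise sup of convex minorants `g` of `f` with `g θ / θ`
antitone on `(0,∞)`. -/
def enat (f : ℝ → EReal) : ℝ → EReal :=
  fun x => ⨆ g : {g : ℝ → EReal // EConvex g ∧ (∀ y, g y ≤ f y) ∧
      AntitoneOn (fun θ : ℝ => g θ * ((θ⁻¹ : ℝ) : EReal)) (Set.Ioi 0)}, g.1 x

/-- `varthetapp f = sup {θ | f θ = enat f θ}`. -/
def varthetapp (f : ℝ → EReal) : EReal :=
  sSup ((fun θ : ℝ => (θ : EReal)) '' {θ : ℝ | f θ = enat f θ})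

/-- `flt f = ((f*)°)*`. -/
def flt (f : ℝ → EReal) : ℝ → EReal := Fd (sweep (Fd f))

/-- The set where `f` is finite. -/
def Phi (f : ℝ → EReal) : Set ℝ := {θ : ℝ | f θ < ⊤}

/-- `A⁺`: points in `A` or above a point of `A`. -/
def plusSet (A : Set ℝ) : Set ℝ := {x : ℝ | ∃ a ∈ A, a ≤ x}

/-- The subdifferential of `f` at `φ`. -/
def esubdiff (f : ℝ → EReal) (φ : ℝ) : Set ℝ :=
  {a : ℝ | ∀ θ : ℝ, f φ + ((a * (θ - φ) : ℝ) : EReal) ≤ f θ}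

open Classical in
/-- The convex indicator of a set: `0` on `C` and `+∞` off it. -/
def echi (C : Set ℝ) : ℝ → EReal := fun θ => if θ ∈ C then 0 else ⊤

set_option maxHeartbeats 1600000

namespace GtotAux


lemma exists_coe {A : EReal} (h1 : A ≠ ⊥) (h2 : A ≠ ⊤) : ∃ c : ℝ, A = (c : EReal) := by
  induction A with
  | bot => exact absurd rfl h1
  | coe c => exact ⟨c, rfl⟩
  | top => exact absurd rfl h2

lemma coe_mul_coe_inv {x : ℝ} (hx : x ≠ 0) : (x : EReal) * ((x⁻¹ : ℝ) : EReal) = 1 := by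
  rw [← EReal.coe_mul, mul_inv_cancel₀ hx, EReal.coe_one]

lemma mul_coe_inv_cancel {A : EReal} {x : ℝ} (hx : x ≠ 0) :
    A * (x : EReal) * ((x⁻¹ : ℝ) : EReal) = A := by
  rw [mul_assoc, coe_mul_coe_inv hx, mul_one]

lemma coe_mul_ratio_cancel {A : EReal} {x : ℝ} (hx : x ≠ 0) :
    (x : EReal) * (A * ((x⁻¹ : ℝ) : EReal)) = A := by
  rw [EReal.mul_comm, mul_assoc, ← EReal.coe_mul, inv_mul_cancel₀ hx, EReal.coe_one, mul_one]

/-- divide/multiply equivalence -/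
lemma ratio_le_iff {A K : EReal} {x : ℝ} (hx : 0 < x) :
    A * ((x⁻¹ : ℝ) : EReal) ≤ K ↔ A ≤ K * (x : EReal) := by
  constructor
  · intro h
    have := mul_le_mul_of_nonneg_right h (le_of_lt (EReal.coe_pos.2 hx))
    rwa [mul_assoc, ← EReal.coe_mul, inv_mul_cancel₀ hx.ne', EReal.coe_one, mul_one] at this
  · intro h
    have := mul_le_mul_of_nonneg_right h
      (le_of_lt (EReal.coe_pos.2 (inv_pos.2 hx)))
    rwa [mul_coe_inv_cancel hx.ne'] at this

lemma le_ratio_iff {A K : EReal} {x : ℝ} (hx : 0 < x) :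
    K ≤ A * ((x⁻¹ : ℝ) : EReal) ↔ K * (x : EReal) ≤ A := by
  constructor
  · intro h
    have := mul_le_mul_of_nonneg_right h (le_of_lt (EReal.coe_pos.2 hx))
    rwa [mul_assoc, ← EReal.coe_mul, inv_mul_cancel₀ hx.ne', EReal.coe_one, mul_one] at this
  · intro h
    have := mul_le_mul_of_nonneg_right h
      (le_of_lt (EReal.coe_pos.2 (inv_pos.2 hx)))
    rwa [mul_coe_inv_cancel hx.ne'] at this

lemma eq_top_of_forall_real_le {v : EReal} (h : ∀ r : ℝ, (r : EReal) ≤ v) : v = ⊤ := by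
  rw [EReal.eq_top_iff_forall_lt]
  intro y
  exact lt_of_lt_of_le (EReal.coe_lt_coe_iff.2 (lt_add_one y)) (h (y + 1))

lemma le_of_forall_real_le {x y : EReal} (h : ∀ r : ℝ, (r : EReal) ≤ x → (r : EReal) ≤ y) :
    x ≤ y := by
  induction x with
  | bot => exact bot_le
  | coe c => exact h c le_rfl
  | top =>
    have : y = ⊤ := eq_top_of_forall_real_le fun r => h r le_top
    simp [this]

lemma sInf_sup_const (S : Set EReal) (hS : S.Nonempty) (k : EReal) :
    sInf ((fun r => r ⊔ k) '' S) = sInf S ⊔ k := by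
  refine le_antisymm ?_ ?_
  · by_contra hcon
    push_neg at hcon
    have hk : k < sInf ((fun r => r ⊔ k) '' S) := lt_of_le_of_lt le_sup_right hcon
    have hS' : ∀ r ∈ S, sInf ((fun r => r ⊔ k) '' S) ≤ r := by
      intro r hr
      have h1 : sInf ((fun r => r ⊔ k) '' S) ≤ r ⊔ k := sInf_le ⟨r, hr, rfl⟩
      rcases le_total r k with h | h
      · exact absurd (h1.trans_eq (sup_eq_right.2 h)) (not_le.2 hk)
      · rwa [sup_eq_left.2 h] at h1
    have : sInf ((fun r => r ⊔ k) '' S) ≤ sInf S := le_sInf hS'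
    exact absurd (this.trans le_sup_left) (not_le.2 hcon)
  · refine le_sInf ?_
    rintro v ⟨r, hr, rfl⟩
    exact sup_le_sup_right (sInf_le hr) k



lemma enat_le (f : ℝ → EReal) (y : ℝ) : enat f y ≤ f y :=
  iSup_le fun g => g.2.2.1 y

lemma le_enat {f g : ℝ → EReal} (h1 : EConvex g) (h2 : ∀ y, g y ≤ f y)
    (h3 : AntitoneOn (fun θ : ℝ => g θ * ((θ⁻¹ : ℝ) : EReal)) (Set.Ioi 0)) (y : ℝ) :
    g y ≤ enat f y :=
  le_iSup (fun (g : {g : ℝ → EReal // EConvex g ∧ (∀ y, g y ≤ f y) ∧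
      AntitoneOn (fun θ : ℝ => g θ * ((θ⁻¹ : ℝ) : EReal)) (Set.Ioi 0)}) => g.1 y)
    (⟨g, h1, h2, h3⟩ :
      {g : ℝ → EReal // EConvex g ∧ (∀ y, g y ≤ f y) ∧
      AntitoneOn (fun θ : ℝ => g θ * ((θ⁻¹ : ℝ) : EReal)) (Set.Ioi 0)})

lemma enat_convex (f : ℝ → EReal) : EConvex (enat f) := by
  have : {p : ℝ × ℝ | enat f p.1 ≤ (p.2 : EReal)} =
      ⋂ g : {g : ℝ → EReal // EConvex g ∧ (∀ y, g y ≤ f y) ∧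
        AntitoneOn (fun θ : ℝ => g θ * ((θ⁻¹ : ℝ) : EReal)) (Set.Ioi 0)},
        {p : ℝ × ℝ | g.1 p.1 ≤ (p.2 : EReal)} := by
    ext p
    simp [enat, iSup_le_iff, Set.mem_iInter]
  rw [EConvex, this]
  exact convex_iInter fun g => g.2.1



lemma enat_ratio_antitone (f : ℝ → EReal) :
    AntitoneOn (fun θ : ℝ => enat f θ * ((θ⁻¹ : ℝ) : EReal)) (Set.Ioi 0) := by
  intro x hx y hy hxy
  simp only
  rw [ratio_le_iff hy]
  refine iSup_le fun g => ?_
  have h1 : g.1 y * ((y⁻¹ : ℝ) : EReal) ≤ g.1 x * ((x⁻¹ : ℝ) : EReal) := g.2.2.2 hx hy hxy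
  have h2 : g.1 x * ((x⁻¹ : ℝ) : EReal) ≤ enat f x * ((x⁻¹ : ℝ) : EReal) := by
    refine mul_le_mul_of_nonneg_right ?_ (le_of_lt (EReal.coe_pos.2 (inv_pos.2 hx)))
    exact le_iSup (fun (g : {g : ℝ → EReal // EConvex g ∧ (∀ y, g y ≤ f y) ∧
      AntitoneOn (fun θ : ℝ => g θ * ((θ⁻¹ : ℝ) : EReal)) (Set.Ioi 0)}) => g.1 x) g
  exact (ratio_le_iff hy).1 (h1.trans h2)

def Irun (f : ℝ → EReal) (x : ℝ) : EReal :=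
  sInf {v | ∃ φ : ℝ, 0 < φ ∧ φ ≤ x ∧ v = f φ * ((φ⁻¹ : ℝ) : EReal)}

lemma Irun_le {f : ℝ → EReal} {φ x : ℝ} (h1 : 0 < φ) (h2 : φ ≤ x) :
    Irun f x ≤ f φ * ((φ⁻¹ : ℝ) : EReal) :=
  sInf_le ⟨φ, h1, h2, rfl⟩

lemma Irun_anti {f : ℝ → EReal} {x y : ℝ} (h : x ≤ y) : Irun f y ≤ Irun f x :=
  sInf_le_sInf fun v ⟨φ, h1, h2, h3⟩ => ⟨φ, h1, h2.trans h, h3⟩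



lemma econvex_combo {f : ℝ → EReal} (hconv : EConvex f) {x₁ x₂ c₁ c₂ μ ν : ℝ}
    (h1 : f x₁ ≤ (c₁ : EReal)) (h2 : f x₂ ≤ (c₂ : EReal))
    (hμ : 0 ≤ μ) (hν : 0 ≤ ν) (hs : μ + ν = 1) :
    f (μ * x₁ + ν * x₂) ≤ ((μ * c₁ + ν * c₂ : ℝ) : EReal) := by
  have := hconv (show ((x₁, c₁) : ℝ × ℝ) ∈ {p : ℝ × ℝ | f p.1 ≤ (p.2 : EReal)} from h1)
    (show ((x₂, c₂) : ℝ × ℝ) ∈ {p : ℝ × ℝ | f p.1 ≤ (p.2 : EReal)} from h2) hμ hν hs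
  simpa [Prod.smul_def, smul_eq_mul] using this

section LB

variable {f : ℝ → EReal} (hconv : EConvex f) {a₀ : ℝ}
  (hl : ∀ x : ℝ, ((x * a₀ : ℝ) : EReal) ≤ f x)
  (hneg : ∀ x : ℝ, x < 0 → f x = ⊤)

include hl in
lemma f_ne_bot : ∀ x : ℝ, f x ≠ ⊥ := by
  intro x h
  have := hl x
  rw [h, le_bot_iff] at this
  exact EReal.coe_ne_bot _ this

include hl in
/-- extraction of an almost-optimal ratio witness -/
lemma extract {x₂ t₂ u₂ : ℝ} (hx2 : 0 < x₂)
    (h2 : (x₂ : EReal) * Irun f x₂ ≤ ((t₂ : ℝ) : EReal)) (hu : t₂ < u₂) :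
    ∃ φ₂ c₂ : ℝ, 0 < φ₂ ∧ φ₂ ≤ x₂ ∧ f φ₂ = (c₂ : EReal) ∧ c₂ * φ₂⁻¹ < u₂ * x₂⁻¹ := by
  have h2' : Irun f x₂ ≤ ((t₂ * x₂⁻¹ : ℝ) : EReal) := by
    have := mul_le_mul_of_nonneg_right h2 (le_of_lt (EReal.coe_pos.2 (inv_pos.2 hx2)))
    rw [EReal.mul_comm (x₂ : EReal) (Irun f x₂), mul_coe_inv_cancel hx2.ne'] at this
    rwa [EReal.coe_mul]
  have hlt : Irun f x₂ < ((u₂ * x₂⁻¹ : ℝ) : EReal) :=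
    lt_of_le_of_lt h2' (EReal.coe_lt_coe_iff.2 (mul_lt_mul_of_pos_right hu (inv_pos.2 hx2)))
  obtain ⟨v, ⟨φ₂, hφ, hφx, rfl⟩, hvlt⟩ := sInf_lt_iff.1 hlt
  have hft : f φ₂ ≠ ⊤ := by
    intro h
    rw [h, EReal.top_mul_of_pos (EReal.coe_pos.2 (inv_pos.2 hφ))] at hvlt
    exact not_top_lt hvlt
  obtain ⟨c₂, hc₂⟩ := exists_coe (f_ne_bot hl φ₂) hft
  rw [hc₂, ← EReal.coe_mul, EReal.coe_lt_coe_iff] at hvlt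
  exact ⟨φ₂, c₂, hφ, hφx, hc₂, hvlt⟩

/-- the natural hull candidate -/
def Gfun (f : ℝ → EReal) : ℝ → EReal :=
  fun y => if 0 < y then (y : EReal) * Irun f y else f y

include hconv hl hneg in
lemma Gfun_key {x₁ x₂ t₁ t₂ a b : ℝ} (hx : x₁ ≤ x₂)
    (h1 : Gfun f x₁ ≤ ((t₁ : ℝ) : EReal)) (h2 : Gfun f x₂ ≤ ((t₂ : ℝ) : EReal))
    (ha : 0 ≤ a) (hb : 0 ≤ b) (hab : a + b = 1) :
    Gfun f (a * x₁ + b * x₂) ≤ ((a * t₁ + b * t₂ : ℝ) : EReal) := by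
  rcases eq_or_lt_of_le ha with ha0 | ha
  · have hb1 : b = 1 := by linarith
    simpa [← ha0, hb1] using h2
  rcases eq_or_lt_of_le hb with hb0 | hb
  · have ha1 : a = 1 := by linarith
    simpa [← hb0, ha1] using h1
  by_cases hx1 : x₁ < 0
  · rw [Gfun, if_neg (by linarith), hneg x₁ hx1, top_le_iff] at h1
    exact absurd h1 (EReal.coe_ne_top t₁)
  push_neg at hx1
  by_cases hx2 : x₂ ≤ 0
  · -- then x₁ = x₂ = 0
    have hx10 : x₁ = 0 := le_antisymm (hx.trans hx2) hx1
    have hx20 : x₂ = 0 := le_antisymm hx2 (hx10 ▸ hx)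
    rw [Gfun, if_neg (by simp [hx10])] at h1
    rw [Gfun, if_neg (by simp [hx20])] at h2
    rw [hx10, hx20]
    simp only [mul_zero, add_zero, Gfun, if_neg (lt_irrefl (0:ℝ))]
    rcases le_total t₁ t₂ with h | h
    · refine (hx10 ▸ h1).trans (EReal.coe_le_coe_iff.2 ?_)
      have e : (a + b) * t₁ = t₁ := by rw [hab, one_mul]
      have e2 : b * t₁ ≤ b * t₂ := mul_le_mul_of_nonneg_left h hb.le
      linarith
    · refine (hx20 ▸ h2).trans (EReal.coe_le_coe_iff.2 ?_)
      have e : (a + b) * t₂ = t₂ := by rw [hab, one_mul]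
      have e2 : a * t₂ ≤ a * t₁ := mul_le_mul_of_nonneg_left h ha.le
      linarith
  push_neg at hx2
  have hs : 0 < a * x₁ + b * x₂ := by nlinarith
  rw [Gfun, if_pos hx2] at h2
  rw [Gfun, if_pos hs]
  rw [← EReal.le_of_forall_lt_iff_le]
  intro z hz
  have hδ : 0 < z - (a * t₁ + b * t₂) := by
    have := EReal.coe_lt_coe_iff.1 hz
    linarith
  set δ : ℝ := z - (a * t₁ + b * t₂) with hδ_def
  set u₁ : ℝ := t₁ + δ with hu₁_def
  set u₂ : ℝ := t₂ + δ with hu₂_def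
  have hz_eq : a * u₁ + b * u₂ = z := by
    have e : a * (t₁ + δ) + b * (t₂ + δ) = (a * t₁ + b * t₂) + (a + b) * δ := by ring
    rw [hu₁_def, hu₂_def, e, hab, one_mul, hδ_def]
    ring
  have ht₁u : t₁ < u₁ := by rw [hu₁_def]; linarith
  have ht₂u : t₂ < u₂ := by rw [hu₂_def]; linarith
  clear_value δ u₁ u₂
  obtain ⟨φ₂, c₂, hφ₂, hφ₂x, hfφ₂, hr₂⟩ := extract hl hx2 h2 ht₂u
  have k2 : x₂ * (c₂ * φ₂⁻¹) < u₂ := by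
    have h' := (mul_lt_mul_iff_right₀ hx2).2 hr₂
    have e : x₂ * (u₂ * x₂⁻¹) = u₂ := by field_simp
    rwa [e] at h'
  rcases eq_or_lt_of_le hx1 with hx10 | hx1pos
  · -- x₁ = 0
    subst hx10
    rw [Gfun, if_neg (lt_irrefl (0:ℝ))] at h1
    have hf0top : f 0 ≠ ⊤ := fun h => absurd (h ▸ h1) (by simp)
    obtain ⟨c₁, hc₁⟩ := exists_coe (f_ne_bot hl 0) hf0top
    have hc₁t : c₁ ≤ t₁ := EReal.coe_le_coe_iff.1 (hc₁ ▸ h1)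
    have hsbx : a * (0:ℝ) + b * x₂ = b * x₂ := by ring
    rw [hsbx] at hs ⊢
    have hD : 0 < b * x₂ + a * φ₂ := by positivity
    have hφpos : 0 < φ₂ * (b * x₂) / (b * x₂ + a * φ₂) := by positivity
    have hφs : φ₂ * (b * x₂) / (b * x₂ + a * φ₂) ≤ b * x₂ := by
      rw [div_le_iff₀ hD]
      have e : (a + b) * φ₂ = φ₂ := by rw [hab, one_mul]
      have e2 : b * φ₂ ≤ b * x₂ := mul_le_mul_of_nonneg_left hφ₂x hb.le
      have h' : φ₂ ≤ b * x₂ + a * φ₂ := by linarith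
      linarith [mul_le_mul_of_nonneg_right h' hs.le]
    have hfB : f (φ₂ * (b * x₂) / (b * x₂ + a * φ₂)) ≤
        (((a * φ₂ * c₁ + b * x₂ * c₂) / (b * x₂ + a * φ₂) : ℝ) : EReal) := by
      have hcombo := econvex_combo hconv (hc₁.le) (hfφ₂.le)
        (show (0:ℝ) ≤ a * φ₂ / (b * x₂ + a * φ₂) by positivity)
        (show (0:ℝ) ≤ b * x₂ / (b * x₂ + a * φ₂) by positivity)
        (by field_simp; try ring; try linarith)
      have e1 : a * φ₂ / (b * x₂ + a * φ₂) * 0 + b * x₂ / (b * x₂ + a * φ₂) * φ₂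
          = φ₂ * (b * x₂) / (b * x₂ + a * φ₂) := by ring
      have e2 : a * φ₂ / (b * x₂ + a * φ₂) * c₁ + b * x₂ / (b * x₂ + a * φ₂) * c₂
          = (a * φ₂ * c₁ + b * x₂ * c₂) / (b * x₂ + a * φ₂) := by ring
      rwa [e1, e2] at hcombo
    have hchain : ((b * x₂ : ℝ) : EReal) * Irun f (b * x₂) ≤
        (((b * x₂) * ((a * φ₂ * c₁ + b * x₂ * c₂) / (b * x₂ + a * φ₂) *
          (φ₂ * (b * x₂) / (b * x₂ + a * φ₂))⁻¹) : ℝ) : EReal) := by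
      have i1 := Irun_le (f := f) hφpos hφs
      have i2 : f (φ₂ * (b * x₂) / (b * x₂ + a * φ₂)) *
          (((φ₂ * (b * x₂) / (b * x₂ + a * φ₂))⁻¹ : ℝ) : EReal) ≤
          (((a * φ₂ * c₁ + b * x₂ * c₂) / (b * x₂ + a * φ₂) *
            (φ₂ * (b * x₂) / (b * x₂ + a * φ₂))⁻¹ : ℝ) : EReal) := by
        rw [EReal.coe_mul]
        exact mul_le_mul_of_nonneg_right hfB (le_of_lt (EReal.coe_pos.2 (inv_pos.2 hφpos)))
      have := mul_le_mul_of_nonneg_left (i1.trans i2) (le_of_lt (EReal.coe_pos.2 hs))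
      rwa [← EReal.coe_mul] at this
    refine hchain.trans (EReal.coe_le_coe_iff.2 ?_)
    rw [← hz_eq]
    have key : (b * x₂) * ((a * φ₂ * c₁ + b * x₂ * c₂) / (b * x₂ + a * φ₂) *
          (φ₂ * (b * x₂) / (b * x₂ + a * φ₂))⁻¹)
        = a * c₁ + b * (x₂ * (c₂ * φ₂⁻¹)) := by
      field_simp
    rw [key]
    have l1 : a * c₁ ≤ a * u₁ := mul_le_mul_of_nonneg_left (by linarith) ha.le
    have l2 : b * (x₂ * (c₂ * φ₂⁻¹)) ≤ b * u₂ := le_of_lt ((mul_lt_mul_iff_right₀ hb).2 k2)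
    linarith
  · -- 0 < x₁
    rw [Gfun, if_pos hx1pos] at h1
    obtain ⟨φ₁, c₁, hφ₁, hφ₁x, hfφ₁, hr₁⟩ := extract hl hx1pos h1 ht₁u
    have k1 : x₁ * (c₁ * φ₁⁻¹) < u₁ := by
      have h' := (mul_lt_mul_iff_right₀ hx1pos).2 hr₁
      have e : x₁ * (u₁ * x₁⁻¹) = u₁ := by field_simp
      rwa [e] at h'
    have hD : 0 < a * x₁ * φ₂ + b * x₂ * φ₁ := by positivity
    have hφpos : 0 < φ₁ * φ₂ * (a * x₁ + b * x₂) / (a * x₁ * φ₂ + b * x₂ * φ₁) := by positivity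
    have hφs : φ₁ * φ₂ * (a * x₁ + b * x₂) / (a * x₁ * φ₂ + b * x₂ * φ₁) ≤ a * x₁ + b * x₂ := by
      rw [div_le_iff₀ hD]
      have e : (a + b) * (φ₁ * φ₂) = φ₁ * φ₂ := by rw [hab, one_mul]
      have e1 : a * φ₂ * φ₁ ≤ a * φ₂ * x₁ :=
        mul_le_mul_of_nonneg_left hφ₁x (mul_nonneg ha.le hφ₂.le)
      have e2 : b * φ₁ * φ₂ ≤ b * φ₁ * x₂ :=
        mul_le_mul_of_nonneg_left hφ₂x (mul_nonneg hb.le hφ₁.le)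
      have h' : φ₁ * φ₂ ≤ a * x₁ * φ₂ + b * x₂ * φ₁ := by linarith
      linarith [mul_le_mul_of_nonneg_right h' hs.le]
    have hfB : f (φ₁ * φ₂ * (a * x₁ + b * x₂) / (a * x₁ * φ₂ + b * x₂ * φ₁)) ≤
        (((a * x₁ * φ₂ * c₁ + b * x₂ * φ₁ * c₂) / (a * x₁ * φ₂ + b * x₂ * φ₁) : ℝ) : EReal) := by
      have hcombo := econvex_combo hconv (hfφ₁.le) (hfφ₂.le)
        (show (0:ℝ) ≤ a * x₁ * φ₂ / (a * x₁ * φ₂ + b * x₂ * φ₁) by positivity)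
        (show (0:ℝ) ≤ b * x₂ * φ₁ / (a * x₁ * φ₂ + b * x₂ * φ₁) by positivity)
        (by field_simp; try ring; try linarith)
      have e1 : a * x₁ * φ₂ / (a * x₁ * φ₂ + b * x₂ * φ₁) * φ₁ +
          b * x₂ * φ₁ / (a * x₁ * φ₂ + b * x₂ * φ₁) * φ₂
          = φ₁ * φ₂ * (a * x₁ + b * x₂) / (a * x₁ * φ₂ + b * x₂ * φ₁) := by
        field_simp
      have e2 : a * x₁ * φ₂ / (a * x₁ * φ₂ + b * x₂ * φ₁) * c₁ +
          b * x₂ * φ₁ / (a * x₁ * φ₂ + b * x₂ * φ₁) * c₂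
          = (a * x₁ * φ₂ * c₁ + b * x₂ * φ₁ * c₂) / (a * x₁ * φ₂ + b * x₂ * φ₁) := by
        field_simp
      rwa [e1, e2] at hcombo
    have hchain : ((a * x₁ + b * x₂ : ℝ) : EReal) * Irun f (a * x₁ + b * x₂) ≤
        (((a * x₁ + b * x₂) * ((a * x₁ * φ₂ * c₁ + b * x₂ * φ₁ * c₂) /
          (a * x₁ * φ₂ + b * x₂ * φ₁) *
          (φ₁ * φ₂ * (a * x₁ + b * x₂) / (a * x₁ * φ₂ + b * x₂ * φ₁))⁻¹) : ℝ) : EReal) := by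
      have i1 := Irun_le (f := f) hφpos hφs
      have i2 : f (φ₁ * φ₂ * (a * x₁ + b * x₂) / (a * x₁ * φ₂ + b * x₂ * φ₁)) *
          (((φ₁ * φ₂ * (a * x₁ + b * x₂) / (a * x₁ * φ₂ + b * x₂ * φ₁))⁻¹ : ℝ) : EReal) ≤
          (((a * x₁ * φ₂ * c₁ + b * x₂ * φ₁ * c₂) / (a * x₁ * φ₂ + b * x₂ * φ₁) *
            (φ₁ * φ₂ * (a * x₁ + b * x₂) / (a * x₁ * φ₂ + b * x₂ * φ₁))⁻¹ : ℝ) : EReal) := by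
        rw [EReal.coe_mul]
        exact mul_le_mul_of_nonneg_right hfB (le_of_lt (EReal.coe_pos.2 (inv_pos.2 hφpos)))
      have := mul_le_mul_of_nonneg_left (i1.trans i2) (le_of_lt (EReal.coe_pos.2 hs))
      rwa [← EReal.coe_mul] at this
    refine hchain.trans (EReal.coe_le_coe_iff.2 ?_)
    rw [← hz_eq]
    have key : (a * x₁ + b * x₂) * ((a * x₁ * φ₂ * c₁ + b * x₂ * φ₁ * c₂) /
          (a * x₁ * φ₂ + b * x₂ * φ₁) *
          (φ₁ * φ₂ * (a * x₁ + b * x₂) / (a * x₁ * φ₂ + b * x₂ * φ₁))⁻¹)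
        = a * (x₁ * (c₁ * φ₁⁻¹)) + b * (x₂ * (c₂ * φ₂⁻¹)) := by
      field_simp
    rw [key]
    have l1 : a * (x₁ * (c₁ * φ₁⁻¹)) ≤ a * u₁ := le_of_lt ((mul_lt_mul_iff_right₀ ha).2 k1)
    have l2 : b * (x₂ * (c₂ * φ₂⁻¹)) ≤ b * u₂ := le_of_lt ((mul_lt_mul_iff_right₀ hb).2 k2)
    linarith

end LB


section LB
variable {f : ℝ → EReal} (hconv : EConvex f) {a₀ : ℝ}
  (hl : ∀ x : ℝ, ((x * a₀ : ℝ) : EReal) ≤ f x)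
  (hneg : ∀ x : ℝ, x < 0 → f x = ⊤)

include hl in
lemma Gfun_le : ∀ y, Gfun f y ≤ f y := by
  intro y
  rw [Gfun]
  split_ifs with hy
  · calc (y : EReal) * Irun f y ≤ (y : EReal) * (f y * ((y⁻¹ : ℝ) : EReal)) :=
        mul_le_mul_of_nonneg_left (Irun_le hy le_rfl) (le_of_lt (EReal.coe_pos.2 hy))
      _ = f y := coe_mul_ratio_cancel hy.ne'
  · exact le_rfl

lemma Gfun_ratio : AntitoneOn (fun θ : ℝ => Gfun f θ * ((θ⁻¹ : ℝ) : EReal)) (Set.Ioi 0) := by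
  intro x hx y hy hxy
  have hx' : (0:ℝ) < x := hx
  have hy' : (0:ℝ) < y := hy
  simp only [Gfun, if_pos hx', if_pos hy']
  rw [EReal.mul_comm (y : EReal) (Irun f y), mul_coe_inv_cancel hy'.ne',
    EReal.mul_comm (x : EReal) (Irun f x), mul_coe_inv_cancel hx'.ne']
  exact Irun_anti hxy

include hconv hl hneg in
lemma Gfun_econvex : EConvex (Gfun f) := by
  intro p hp q hq a b ha hb hab
  simp only [mem_setOf_eq] at hp hq ⊢
  simp only [Prod.fst_add, Prod.snd_add, Prod.smul_fst, Prod.smul_snd, smul_eq_mul]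
  rcases le_total p.1 q.1 with h | h
  · exact Gfun_key hconv hl hneg h hp hq ha hb hab
  · have := Gfun_key hconv hl hneg h hq hp hb ha (by linarith)
    rw [show b * q.1 + a * p.1 = a * p.1 + b * q.1 by ring,
      show b * q.2 + a * p.2 = a * p.2 + b * q.2 by ring] at this
    exact this

include hconv hl hneg in
lemma enat_ge_Irun {x : ℝ} (hx : 0 < x) : (x : EReal) * Irun f x ≤ enat f x := by
  have h := le_enat (f := f) (Gfun_econvex hconv hl hneg) (Gfun_le hl) (Gfun_ratio) x
  rwa [Gfun, if_pos hx] at h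

end LB

/-- the step minorant showing `enat f = ⊤` on negatives -/
lemma enat_neg_top {f : ℝ → EReal} (hneg : ∀ x : ℝ, x < 0 → f x = ⊤) {x : ℝ} (hx : x < 0) :
    enat f x = ⊤ := by
  have h := le_enat (f := f) (g := fun y => if y < 0 then (⊤ : EReal) else ⊥)
    ?_ ?_ ?_ x
  · rw [if_pos hx, top_le_iff] at h
    exact h
  · intro p hp q hq a b ha hb hab
    simp only [mem_setOf_eq] at hp hq ⊢
    simp only [Prod.fst_add, Prod.smul_fst, smul_eq_mul]
    split_ifs with hcon
    · exfalso
      by_cases h1 : p.1 < 0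
      · rw [if_pos h1] at hp
        exact absurd (top_le_iff.1 hp) (EReal.coe_ne_top _)
      by_cases h2 : q.1 < 0
      · rw [if_pos h2] at hq
        exact absurd (top_le_iff.1 hq) (EReal.coe_ne_top _)
      push_neg at h1 h2
      nlinarith [mul_le_mul_of_nonneg_left h1 ha, mul_le_mul_of_nonneg_left h2 hb]
    · exact bot_le
  · intro y
    show (if y < 0 then (⊤ : EReal) else ⊥) ≤ f y
    split_ifs with h
    · exact (hneg y h).ge
    · exact bot_le
  · intro u hu v hv huv
    have hu' : ¬ (u < 0) := not_lt.2 (le_of_lt hu)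
    have hv' : ¬ (v < 0) := not_lt.2 (le_of_lt hv)
    show (if v < 0 then (⊤ : EReal) else ⊥) * _ ≤ (if u < 0 then (⊤ : EReal) else ⊥) * _
    rw [if_neg hu', if_neg hv', EReal.bot_mul_of_pos (EReal.coe_pos.2 (inv_pos.2 hv)),
      EReal.bot_mul_of_pos (EReal.coe_pos.2 (inv_pos.2 hu))]



lemma coe_affine_ratio (c m : ℝ) {x : ℝ} (hx : x ≠ 0) :
    ((c + m * x : ℝ) : EReal) * ((x⁻¹ : ℝ) : EReal) = ((c * x⁻¹ + m : ℝ) : EReal) := by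
  rw [← EReal.coe_mul]
  congr 1
  field_simp

lemma affine_econvex (c m : ℝ) : EConvex (fun x => ((c + m * x : ℝ) : EReal)) := by
  intro p hp q hq a b ha hb hab
  simp only [mem_setOf_eq, EReal.coe_le_coe_iff] at hp hq ⊢
  simp only [Prod.fst_add, Prod.snd_add, Prod.smul_fst, Prod.smul_snd, smul_eq_mul]
  have e : (a + b) * c = c := by rw [hab, one_mul]
  nlinarith [mul_le_mul_of_nonneg_left hp ha, mul_le_mul_of_nonneg_left hq hb]

lemma affine_ratio_antitone {c : ℝ} (m : ℝ) (hc : 0 ≤ c) :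
    AntitoneOn (fun θ : ℝ => ((c + m * θ : ℝ) : EReal) * ((θ⁻¹ : ℝ) : EReal)) (Set.Ioi 0) := by
  intro x hx y hy hxy
  have hx' : (0:ℝ) < x := hx
  have hy' : (0:ℝ) < y := hy
  simp only [coe_affine_ratio c m hx'.ne', coe_affine_ratio c m hy'.ne',
    EReal.coe_le_coe_iff]
  have : c * y⁻¹ ≤ c * x⁻¹ :=
    mul_le_mul_of_nonneg_left (by rw [inv_le_inv₀ hy' hx']; exact hxy) hc
  linarith

lemma affine_le_enat {f : ℝ → EReal} {c m : ℝ} (hc : 0 ≤ c)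
    (hle : ∀ y, ((c + m * y : ℝ) : EReal) ≤ f y) (x : ℝ) :
    ((c + m * x : ℝ) : EReal) ≤ enat f x :=
  le_enat (affine_econvex c m) hle (affine_ratio_antitone m hc) x

/-- step function: `⊤` on `(-∞, d]`, linear `m·x` after -/
lemma step_le_enat {f : ℝ → EReal} {d m : ℝ}
    (hle : ∀ y, (if y ≤ d then (⊤ : EReal) else ((m * y : ℝ) : EReal)) ≤ f y) (x : ℝ) :
    (if x ≤ d then (⊤ : EReal) else ((m * x : ℝ) : EReal)) ≤ enat f x := by
  refine le_enat ?_ hle ?_ x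
  · intro p hp q hq a b ha hb hab
    simp only [mem_setOf_eq] at hp hq ⊢
    simp only [Prod.fst_add, Prod.snd_add, Prod.smul_fst, Prod.smul_snd, smul_eq_mul]
    by_cases h1 : p.1 ≤ d
    · rw [if_pos h1] at hp
      exact absurd (top_le_iff.1 hp) (EReal.coe_ne_top _)
    by_cases h2 : q.1 ≤ d
    · rw [if_pos h2] at hq
      exact absurd (top_le_iff.1 hq) (EReal.coe_ne_top _)
    rw [if_neg h1] at hp
    rw [if_neg h2] at hq
    push_neg at h1 h2
    rw [EReal.coe_le_coe_iff] at hp hq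
    have e : (a + b) * d = d := by rw [hab, one_mul]
    have hd : ¬ (a * p.1 + b * q.1 ≤ d) := by
      push_neg
      rcases eq_or_lt_of_le ha with ha0 | ha0
      · have hb1 : b = 1 := by linarith
        rw [← ha0, hb1]; linarith
      · linarith [mul_le_mul_of_nonneg_left h2.le hb, mul_lt_mul_of_pos_left h1 ha0]
    rw [if_neg hd, EReal.coe_le_coe_iff]
    linarith [mul_le_mul_of_nonneg_left hp ha, mul_le_mul_of_nonneg_left hq hb]
  · intro x hx y hy hxy
    have hx' : (0:ℝ) < x := hx
    have hy' : (0:ℝ) < y := hy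
    simp only
    by_cases h1 : x ≤ d
    · rw [if_pos h1, EReal.top_mul_of_pos (EReal.coe_pos.2 (inv_pos.2 hx'))]
      exact le_top
    · rw [if_neg h1]
      rw [if_neg (by push_neg at h1 ⊢; linarith)]
      rw [← EReal.coe_mul, ← EReal.coe_mul, EReal.coe_le_coe_iff]
      have e1 : m * x * x⁻¹ = m := by field_simp
      have e2 : m * y * y⁻¹ = m := by field_simp
      rw [e1, e2]

lemma enat_top {h : ℝ → EReal} (hh : ∀ y, h y = ⊤) (x : ℝ) : enat h x = ⊤ := by
  have := le_enat (f := h) (g := fun _ => (⊤ : EReal)) ?_ ?_ ?_ x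
  · exact top_le_iff.1 this
  · intro p hp q hq a b ha hb hab
    exact absurd (top_le_iff.1 hp) (EReal.coe_ne_top _)
  · intro y; rw [hh y]
  · intro u hu v hv huv
    simp only [EReal.top_mul_of_pos (EReal.coe_pos.2 (inv_pos.2 (mem_Ioi.1 hu))),
      EReal.top_mul_of_pos (EReal.coe_pos.2 (inv_pos.2 (mem_Ioi.1 hv))), le_refl]

/-- key chain: bound `enat F θ / θ` through a point `c ≤ θ`. -/
lemma enat_ratio_le {F : ℝ → EReal} {c θ : ℝ} (hc : 0 < c) (hθ : 0 < θ) (hcθ : c ≤ θ)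
    {K : EReal} (hK : F c * ((c⁻¹ : ℝ) : EReal) ≤ K) :
    enat F θ * ((θ⁻¹ : ℝ) : EReal) ≤ K := by
  rw [ratio_le_iff hθ]
  refine iSup_le fun g => ?_
  have h1 : g.1 θ * ((θ⁻¹ : ℝ) : EReal) ≤ g.1 c * ((c⁻¹ : ℝ) : EReal) :=
    g.2.2.2 (mem_Ioi.2 hc) (mem_Ioi.2 hθ) hcθ
  have h2 : g.1 c * ((c⁻¹ : ℝ) : EReal) ≤ F c * ((c⁻¹ : ℝ) : EReal) :=
    mul_le_mul_of_nonneg_right (g.2.2.1 c) (le_of_lt (EReal.coe_pos.2 (inv_pos.2 hc)))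
  exact (ratio_le_iff hθ).1 ((h1.trans h2).trans hK)

lemma exists_lin_minorant {f : ℝ → EReal} (hΓ : ⊥ < speedp (Fd f)) :
    ∃ a₀ : ℝ, ∀ x : ℝ, ((x * a₀ : ℝ) : EReal) ≤ f x := by
  obtain ⟨a₀, _, ha₀⟩ := EReal.exists_between_coe_real hΓ
  refine ⟨a₀, fun x => ?_⟩
  have hFd : Fd f a₀ ≤ 0 := by
    by_contra h
    push_neg at h
    have : speedp (Fd f) ≤ (a₀ : EReal) := sInf_le ⟨a₀, h, rfl⟩
    exact absurd this (not_le.2 ha₀)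
  have h1 : ((x * a₀ : ℝ) : EReal) - f x ≤ 0 :=
    le_trans (le_iSup (fun θ : ℝ => ((θ * a₀ : ℝ) : EReal) - f θ) x) hFd
  have h2 := (EReal.sub_le_iff_le_add (c := (0 : EReal))
    (Or.inr (by simp)) (Or.inr (by simp))).1 h1
  rwa [zero_add] at h2

lemma max_mul_coe {A B : EReal} {r : ℝ} (hr : 0 ≤ r) :
    max A B * ((r : ℝ) : EReal) = max (A * (r : EReal)) (B * (r : EReal)) := by
  rcases le_total A B with h | h
  · rw [max_eq_right h, max_eq_right (mul_le_mul_of_nonneg_right h (EReal.coe_nonneg.2 hr))]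
  · rw [max_eq_left h, max_eq_left (mul_le_mul_of_nonneg_right h (EReal.coe_nonneg.2 hr))]


end GtotAux

open GtotAux in
/-- Lemma `gtot`: formula for `g(θ)/θ` where
`g = max (nat (nat f + χ_C)) κ`, assuming `g` is finite somewhere. -/
theorem gtot (f κ : ℝ → EReal) (hf : KConvex f) (hκ : KConvex κ)
    (hΓ : ⊥ < speedp (Fd f))
    (C : Set ℝ) (hC : Convex ℝ C)
    (hψ : 0 < sSup ((fun x : ℝ => (x : EReal)) '' C))
    (g : ℝ → EReal)
    (hg : g = fun θ => max (enat (fun x => enat f x + echi C x) θ) (κ θ))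
    (hfin : ∃ θ₀ : ℝ, g θ₀ < ⊤) :
    (∀ θ : ℝ, 0 < θ → θ ∉ plusSet C → g θ = ⊤) ∧
    (∀ θ : ℝ, 0 < θ → θ ∈ plusSet C →
      g θ * ((θ⁻¹ : ℝ) : EReal) =
        sInf {v : EReal | ∃ φ : ℝ, 0 < φ ∧ φ ≤ θ ∧
          (φ : EReal) ≤ sSup ((fun x : ℝ => (x : EReal)) '' C) ∧
          v = max (f φ * ((φ⁻¹ : ℝ) : EReal)) (κ θ * ((θ⁻¹ : ℝ) : EReal))}) := by
  obtain ⟨hfconv, hfex, hfneg⟩ := hf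
  obtain ⟨a₀, hl⟩ := exists_lin_minorant hΓ
  have hfneg' : ∀ x : ℝ, x < 0 → f x = ⊤ := fun x hx => hfneg x hx
  have fnebot : ∀ x : ℝ, f x ≠ ⊥ := by
    intro x h
    have := hl x
    rw [h, le_bot_iff] at this
    exact EReal.coe_ne_bot _ this
  have hEl : ∀ x : ℝ, ((x * a₀ : ℝ) : EReal) ≤ enat f x := by
    intro x
    have h := affine_le_enat (f := f) (c := 0) (m := a₀) le_rfl
      (fun y => by simpa [mul_comm] using hl y) x
    simpa [mul_comm] using h
  have hEnb : ∀ x : ℝ, enat f x ≠ ⊥ := by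
    intro x h
    have := hEl x
    rw [h, le_bot_iff] at this
    exact EReal.coe_ne_bot _ this
  have hchinb : ∀ x : ℝ, echi C x ≠ ⊥ := by
    intro x
    rw [echi]
    split_ifs
    · simp
    · simp
  have hFin : ∀ x ∈ C, enat f x + echi C x = enat f x := by
    intro x hx
    rw [echi]
    simp [hx]
  have hFout : ∀ x ∉ C, enat f x + echi C x = ⊤ := by
    intro x hx
    rw [echi]
    simp only [if_neg hx]
    exact EReal.add_top_of_ne_bot (hEnb x)
  have hEF : ∀ y : ℝ, enat f y ≤ enat f y + echi C y := by
    intro y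
    by_cases hy : y ∈ C
    · rw [hFin y hy]
    · rw [hFout y hy]; exact le_top
  have hEN : ∀ y : ℝ, enat f y ≤ enat (fun x => enat f x + echi C x) y :=
    le_enat (enat_convex f) hEF (enat_ratio_antitone f)
  have hFneg : ∀ x : ℝ, x < 0 → enat f x + echi C x = ⊤ := by
    intro x hx
    rw [enat_neg_top hfneg' hx]
    exact EReal.top_add_of_ne_bot (hchinb x)
  subst hg
  constructor
  · -- part 1
    intro θ hθ hθp
    have hCgt : ∀ c ∈ C, θ < c := by
      intro c hc
      by_contra hle
      exact hθp ⟨c, hc, not_lt.1 hle⟩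
    have hw := step_le_enat (f := fun x => enat f x + echi C x) (d := θ) (m := a₀) ?_ θ
    · rw [if_pos le_rfl, top_le_iff] at hw
      exact eq_top_iff.2 (hw ▸ le_max_left _ _)
    · intro y
      show (if y ≤ θ then (⊤ : EReal) else ((a₀ * y : ℝ) : EReal)) ≤ enat f y + echi C y
      split_ifs with hy
      · have hyC : y ∉ C := fun hmem => absurd hy (not_le.2 (hCgt y hmem))
        rw [hFout y hyC]
      · by_cases hyC : y ∈ C
        · rw [hFin y hyC]
          exact (by simpa [mul_comm] using hEl y)
        · rw [hFout y hyC]; exact le_top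
  · -- part 2
    intro θ hθ hθp
    obtain ⟨aC, haC, haCθ⟩ := hθp
    set ψE : EReal := sSup ((fun x : ℝ => (x : EReal)) '' C) with hψE_def
    set Iset : Set EReal := {v : EReal | ∃ φ : ℝ, 0 < φ ∧ φ ≤ θ ∧
      (φ : EReal) ≤ ψE ∧ v = f φ * ((φ⁻¹ : ℝ) : EReal)} with hIset_def
    have hIne : Iset.Nonempty := by
      rcases le_or_gt (θ : EReal) ψE with h | h
      · exact ⟨f θ * ((θ⁻¹ : ℝ) : EReal), θ, hθ, le_rfl, h, rfl⟩
      · obtain ⟨c, hc⟩ := exists_coe (ne_bot_of_gt hψ) (ne_top_of_lt h)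
        have hc0 : 0 < c := EReal.coe_pos.1 (hc ▸ hψ)
        have hcθ : c ≤ θ := le_of_lt (EReal.coe_lt_coe_iff.1 (hc ▸ h))
        exact ⟨f c * ((c⁻¹ : ℝ) : EReal), c, hc0, hcθ, hc.ge, rfl⟩
    -- upper bound
    have upper : enat (fun x => enat f x + echi C x) θ * ((θ⁻¹ : ℝ) : EReal) ≤ sInf Iset := by
      refine le_sInf ?_
      rintro v ⟨φ, hφ0, hφθ, hφψ, rfl⟩
      by_cases hcex : ∃ c ∈ C, φ ≤ c ∧ c ≤ θ
      · obtain ⟨c, hcC, hφc, hcθ⟩ := hcex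
        refine enat_ratio_le (lt_of_lt_of_le hφ0 hφc) hθ hcθ ?_
        show (enat f c + echi C c) * ((c⁻¹ : ℝ) : EReal) ≤ _
        rw [hFin c hcC]
        refine le_trans (enat_ratio_antitone f (mem_Ioi.2 hφ0)
          (mem_Ioi.2 (lt_of_lt_of_le hφ0 hφc)) hφc) ?_
        exact mul_le_mul_of_nonneg_right (enat_le f φ)
          (le_of_lt (EReal.coe_pos.2 (inv_pos.2 hφ0)))
      · push_neg at hcex
        have haφ : aC < φ := by
          by_contra hle
          push_neg at hle
          exact absurd haCθ (not_le.2 (hcex aC haC hle))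
        have hψφ : ψE = (φ : EReal) := by
          refine le_antisymm ?_ hφψ
          by_contra hcon
          push_neg at hcon
          obtain ⟨e, ⟨c', hc'C, rfl⟩, hφc'⟩ := lt_sSup_iff.1 hcon
          have hφc' : φ < c' := EReal.coe_lt_coe_iff.1 hφc'
          rcases le_or_gt c' θ with h | h
          · exact absurd h (not_le.2 (hcex c' hc'C hφc'.le))
          · have hθC : θ ∈ C := hC.ordConnected.out haC hc'C ⟨haCθ, h.le⟩
            exact lt_irrefl θ (hcex θ hθC hφθ)
        have hIco : Ico aC φ ⊆ C := by
          intro y ⟨hay, hyφ⟩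
          have : (y : EReal) < ψE := hψφ ▸ EReal.coe_lt_coe_iff.2 hyφ
          obtain ⟨e, ⟨c', hc'C, rfl⟩, hyc'⟩ := lt_sSup_iff.1 this
          exact hC.ordConnected.out haC hc'C ⟨hay, (EReal.coe_lt_coe_iff.1 hyc').le⟩
        by_cases hA : ∃ x₀ : ℝ, 0 < x₀ ∧ x₀ < φ ∧ f x₀ < ⊤
        · -- chord case
          obtain ⟨x₀, hx₀0, hx₀φ, hx₀top⟩ := hA
          by_cases hfφ : f φ = ⊤
          · rw [hfφ, EReal.top_mul_of_pos (EReal.coe_pos.2 (inv_pos.2 hφ0))]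
            exact le_top
          obtain ⟨t, ht⟩ := exists_coe (fnebot φ) hfφ
          obtain ⟨c₀, hc₀⟩ := exists_coe (fnebot x₀) hx₀top.ne
          have hR : ∀ x : ℝ, x₀ ≤ x → x < φ →
              enat (fun x => enat f x + echi C x) θ * ((θ⁻¹ : ℝ) : EReal) ≤
              f x * ((x⁻¹ : ℝ) : EReal) := by
            intro x hx1 hx2
            have hx0 : 0 < x := lt_of_lt_of_le hx₀0 hx1
            have hcC : max aC x ∈ C := hIco ⟨le_max_left _ _, max_lt haφ hx2⟩
            have hc0 : 0 < max aC x := lt_of_lt_of_le hx0 (le_max_right _ _)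
            have hcθ : max aC x ≤ θ := le_trans (max_lt haφ hx2).le hφθ
            refine enat_ratio_le hc0 hθ hcθ ?_
            show (enat f (max aC x) + echi C (max aC x)) * (((max aC x)⁻¹ : ℝ) : EReal) ≤ _
            rw [hFin _ hcC]
            refine le_trans (enat_ratio_antitone f (mem_Ioi.2 hx0)
              (mem_Ioi.2 hc0) (le_max_right _ _)) ?_
            exact mul_le_mul_of_nonneg_right (enat_le f x)
              (le_of_lt (EReal.coe_pos.2 (inv_pos.2 hx0)))
          have hseq : ∀ n : ℕ,
              enat (fun x => enat f x + echi C x) θ * ((θ⁻¹ : ℝ) : EReal) ≤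
              (((1/((n:ℝ)+1) * c₀ + (1 - 1/((n:ℝ)+1)) * t) *
                (φ - (φ - x₀) * (1/((n:ℝ)+1)))⁻¹ : ℝ) : EReal) := by
            intro n
            have hlam0 : 0 < 1/((n:ℝ)+1) := by positivity
            have hlam1 : 1/((n:ℝ)+1) ≤ 1 := by
              rw [div_le_one (by positivity)]
              have hn : (0:ℝ) ≤ (n:ℝ) := Nat.cast_nonneg n
              linarith
            have hxn1 : x₀ ≤ φ - (φ - x₀) * (1/((n:ℝ)+1)) := by nlinarith
            have hxn2 : φ - (φ - x₀) * (1/((n:ℝ)+1)) < φ := by nlinarith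
            have hxn0 : 0 < φ - (φ - x₀) * (1/((n:ℝ)+1)) := lt_of_lt_of_le hx₀0 hxn1
            refine le_trans (hR _ hxn1 hxn2) ?_
            have hcombo := econvex_combo hfconv (μ := 1/((n:ℝ)+1))
              (ν := 1 - 1/((n:ℝ)+1)) hc₀.le ht.le hlam0.le (by linarith) (by ring)
            have e : 1/((n:ℝ)+1) * x₀ + (1 - 1/((n:ℝ)+1)) * φ
                = φ - (φ - x₀) * (1/((n:ℝ)+1)) := by ring
            rw [e] at hcombo
            refine le_trans (mul_le_mul_of_nonneg_right hcombo
              (le_of_lt (EReal.coe_pos.2 (inv_pos.2 hxn0)))) ?_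
            rw [← EReal.coe_mul]
          have htend : Tendsto (fun n : ℕ =>
              ((1/((n:ℝ)+1) * c₀ + (1 - 1/((n:ℝ)+1)) * t) *
                (φ - (φ - x₀) * (1/((n:ℝ)+1)))⁻¹ : ℝ)) atTop (𝓝 (t * φ⁻¹)) := by
            have h0 : Tendsto (fun n : ℕ => 1/((n:ℝ)+1)) atTop (𝓝 0) :=
              tendsto_one_div_add_atTop_nhds_zero_nat
            have hcont : ContinuousAt
                (fun lam : ℝ => (lam * c₀ + (1 - lam) * t) * (φ - (φ - x₀) * lam)⁻¹) 0 := by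
              apply ContinuousAt.mul
              · fun_prop
              · apply ContinuousAt.inv₀
                · fun_prop
                · simpa using hφ0.ne'
            have := hcont.tendsto.comp h0
            simpa [Function.comp_def] using this
          have hlim : enat (fun x => enat f x + echi C x) θ * ((θ⁻¹ : ℝ) : EReal) ≤
              ((t * φ⁻¹ : ℝ) : EReal) :=
            ge_of_tendsto' (EReal.tendsto_coe.2 htend) hseq
          rw [ht, ← EReal.coe_mul]
          exact hlim
        · -- degenerate case: `f = ⊤` below `φ`, contradiction with `hfin`
          exfalso
          push_neg at hA
          have hB : ∀ x : ℝ, 0 < x → x < φ → f x = ⊤ := by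
            intro x h1 h2
            exact top_le_iff.1 (hA x h1 h2)
          have hf0 : f 0 = ⊤ := by
            by_contra h0
            obtain ⟨θp, hθp0, hθptop⟩ := hfex
            have hθpφ : φ ≤ θp := by
              by_contra hlt
              push_neg at hlt
              exact absurd (hB θp hθp0 hlt) hθptop.ne
            obtain ⟨c₀, hc₀⟩ := exists_coe (fnebot 0) h0
            obtain ⟨cp, hcp⟩ := exists_coe (fnebot θp) hθptop.ne
            have hθpp : 0 < θp := hθp0
            have hν0 : 0 ≤ φ/(2*θp) := by positivity
            have hν1 : φ/(2*θp) ≤ 1 := by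
              rw [div_le_one (by positivity)]
              linarith
            have hcombo := econvex_combo hfconv (μ := 1 - φ/(2*θp)) (ν := φ/(2*θp))
              hc₀.le hcp.le (by linarith : (0:ℝ) ≤ 1 - φ/(2*θp)) hν0 (by ring)
            have e : (1 - φ/(2*θp)) * 0 + (φ/(2*θp)) * θp = φ/2 := by
              field_simp
              ring
            rw [e] at hcombo
            have htop := hB (φ/2) (by positivity) (by linarith)
            rw [htop, top_le_iff] at hcombo
            exact EReal.coe_ne_top _ hcombo
          have hftop : ∀ x : ℝ, x < φ → f x = ⊤ := by
            intro x hx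
            rcases lt_trichotomy x 0 with h | h | h
            · exact hfneg' x h
            · exact h ▸ hf0
            · exact hB x h hx
          have hEtop : ∀ x : ℝ, x < φ → enat f x = ⊤ := by
            intro x hx
            apply eq_top_of_forall_real_le
            intro M
            set m : ℝ := min a₀ ((M - a₀*φ)/(x - φ)) with hm_def
            have hma : m ≤ a₀ := min_le_left _ _
            have hc : 0 ≤ (a₀ - m)*φ := mul_nonneg (by linarith) hφ0.le
            have haff := affine_le_enat (f := f) (c := (a₀-m)*φ) (m := m) hc ?_ x
            · refine le_trans (EReal.coe_le_coe_iff.2 ?_) haff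
              have h2 : m ≤ (M - a₀*φ)/(x-φ) := min_le_right _ _
              have hxφ : x - φ < 0 := by linarith
              have := (le_div_iff_of_neg hxφ).1 h2
              nlinarith
            · intro y
              by_cases hy : y < φ
              · rw [hftop y hy]; exact le_top
              · push_neg at hy
                refine le_trans (EReal.coe_le_coe_iff.2 ?_) (hl y)
                nlinarith
          have hFtop : ∀ x : ℝ, (enat f x + echi C x) = ⊤ := by
            intro x
            by_cases hx : x ∈ C
            · rw [hFin x hx]
              refine hEtop x ?_
              have h1 : (x : EReal) ≤ ψE := le_sSup ⟨x, hx, rfl⟩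
              have h2 : x ≤ φ := EReal.coe_le_coe_iff.1 (hψφ ▸ h1)
              rcases eq_or_lt_of_le h2 with h3 | h3
              · exact absurd hφθ (not_le.2 (hcex φ (h3 ▸ hx) le_rfl))
              · exact h3
            · exact hFout x hx
          obtain ⟨θ₀, hθ₀⟩ := hfin
          have h := enat_top hFtop θ₀
          simp only [h] at hθ₀
          exact absurd (lt_of_le_of_lt (le_max_left _ _) hθ₀) (lt_irrefl ⊤)
    -- lower bound
    have lower : sInf Iset ≤ enat (fun x => enat f x + echi C x) θ * ((θ⁻¹ : ℝ) : EReal) := by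
      rcases le_or_gt (θ : EReal) ψE with hθψ | hψθ
      · have h1 : sInf Iset ≤ Irun f θ := by
          refine le_sInf ?_
          rintro v ⟨φ, hφ0, hφθ, rfl⟩
          exact sInf_le ⟨φ, hφ0, hφθ, le_trans (EReal.coe_le_coe_iff.2 hφθ) hθψ, rfl⟩
        refine h1.trans ?_
        rw [le_ratio_iff hθ]
        rw [EReal.mul_comm]
        exact (enat_ge_Irun hfconv hl hfneg' hθ).trans (hEN θ)
      · obtain ⟨ψb, hψb⟩ := exists_coe (ne_bot_of_gt hψ) (ne_top_of_lt hψθ)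
        have hψb0 : 0 < ψb := EReal.coe_pos.1 (hψb ▸ hψ)
        have hψbθ : ψb < θ := EReal.coe_lt_coe_iff.1 (hψb ▸ hψθ)
        refine le_of_forall_real_le ?_
        intro μ hμI
        -- the linear-through-origin minorant
        have hw := le_enat (f := fun x => enat f x + echi C x)
          (g := fun x => if x < 0 then (⊤:EReal) else ((μ * x : ℝ) : EReal)) ?_ ?_ ?_ θ
        · rw [if_neg (not_lt.2 hθ.le)] at hw
          rwa [le_ratio_iff hθ, ← EReal.coe_mul]
        · intro p hp q hq a b ha hb hab
          simp only [mem_setOf_eq] at hp hq ⊢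
          simp only [Prod.fst_add, Prod.snd_add, Prod.smul_fst, Prod.smul_snd, smul_eq_mul]
          by_cases h1 : p.1 < 0
          · rw [if_pos h1] at hp
            exact absurd (top_le_iff.1 hp) (EReal.coe_ne_top _)
          by_cases h2 : q.1 < 0
          · rw [if_pos h2] at hq
            exact absurd (top_le_iff.1 hq) (EReal.coe_ne_top _)
          push_neg at h1 h2
          rw [if_neg (not_lt.2 h1)] at hp
          rw [if_neg (not_lt.2 h2)] at hq
          rw [EReal.coe_le_coe_iff] at hp hq
          rw [if_neg (not_lt.2 (add_nonneg (mul_nonneg ha h1) (mul_nonneg hb h2))),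
            EReal.coe_le_coe_iff]
          nlinarith [mul_le_mul_of_nonneg_left hp ha, mul_le_mul_of_nonneg_left hq hb]
        · intro y
          show (if y < 0 then (⊤ : EReal) else ((μ * y : ℝ) : EReal)) ≤ enat f y + echi C y
          by_cases hy : y < 0
          · rw [if_pos hy, hFneg y hy]
          rw [if_neg hy]
          push_neg at hy
          by_cases hyC : y ∈ C
          · rw [hFin y hyC]
            rcases eq_or_lt_of_le hy with hy0 | hy0
            · rw [← hy0]
              simpa using hEl 0
            · have hyψ : y ≤ ψb := by
                have := le_sSup (s := (fun x : ℝ => (x : EReal)) '' C) ⟨y, hyC, rfl⟩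
                rw [← hψE_def, hψb] at this
                exact EReal.coe_le_coe_iff.1 this
              have hcoeμ : (μ : EReal) ≤ Irun f y := by
                refine le_sInf ?_
                rintro v ⟨φ, hφ0, hφy, rfl⟩
                exact hμI.trans (sInf_le ⟨φ, hφ0, le_of_lt (lt_of_le_of_lt
                  (hφy.trans hyψ) hψbθ), (EReal.coe_le_coe_iff.2 (hφy.trans hyψ)).trans
                  hψb.ge, rfl⟩)
              have h3 : ((μ * y : ℝ) : EReal) ≤ (y : EReal) * Irun f y := by
                rw [mul_comm μ y, EReal.coe_mul]
                exact mul_le_mul_of_nonneg_left hcoeμ (EReal.coe_nonneg.2 hy)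
              exact h3.trans (enat_ge_Irun hfconv hl hfneg' hy0)
          · rw [hFout y hyC]; exact le_top
        · intro u hu v hv huv
          have hu' : (0:ℝ) < u := hu
          have hv' : (0:ℝ) < v := hv
          simp only [if_neg (not_lt.2 hu'.le), if_neg (not_lt.2 hv'.le)]
          rw [← EReal.coe_mul, ← EReal.coe_mul, EReal.coe_le_coe_iff]
          have e1 : μ * u * u⁻¹ = μ := by field_simp
          have e2 : μ * v * v⁻¹ = μ := by field_simp
          rw [e1, e2]
    have hNI : enat (fun x => enat f x + echi C x) θ * ((θ⁻¹ : ℝ) : EReal) = sInf Iset :=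
      le_antisymm upper lower
    -- final assembly
    have hset : {v : EReal | ∃ φ : ℝ, 0 < φ ∧ φ ≤ θ ∧ (φ : EReal) ≤ ψE ∧
        v = max (f φ * ((φ⁻¹ : ℝ) : EReal)) (κ θ * ((θ⁻¹ : ℝ) : EReal))} =
        (fun r => r ⊔ (κ θ * ((θ⁻¹ : ℝ) : EReal))) '' Iset := by
      ext v
      constructor
      · rintro ⟨φ, h1, h2, h3, rfl⟩
        exact ⟨f φ * ((φ⁻¹ : ℝ) : EReal), ⟨φ, h1, h2, h3, rfl⟩, rfl⟩
      · rintro ⟨r, ⟨φ, h1, h2, h3, rfl⟩, rfl⟩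
        exact ⟨φ, h1, h2, h3, rfl⟩
    rw [hset, sInf_sup_const Iset hIne, max_mul_coe (inv_pos.2 hθ).le, ← hNI]
end
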